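/- Let f : ℝ^n → ℝ be a homogeneous polynomial of degree d and suppose that for no pair (x, y) ∈ ℂ^n × ℂ^n with x ≠ 0, y ≠ 0 the system y^T x = 0 and rank [[∇f(x), x, 0],[∇²f(x)y, y, x]] ≤ 2 is satisfiable. Then every point x* ∈ S^{n-1} satisfying the first and second order necessary optimality conditions for min f over S^{n-1} satisfies the second order sufficient condition, and hence is a local minimizer of f on S^{n-1}. -/

import Mathlib

open MvPolynomial Finset Finsupp

lemma my_pderiv_comm {σ : Type*} [DecidableEq σ] {R : Type*} [CommSemiring R] (i j : σ)
    (p : MvPolynomial σ R) : pderiv i (pderiv j p) = pderiv j (pderiv i p) := by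
  rcases eq_or_ne i j with rfl | hij
  · rfl
  · induction p using MvPolynomial.induction_on' with
    | monomial m a =>
        simp only [pderiv_monomial]
        rw [tsub_tsub, tsub_tsub, add_comm]
        congr 1
        rw [Finsupp.tsub_apply, Finsupp.tsub_apply,
          Finsupp.single_eq_of_ne' hij, Finsupp.single_eq_of_ne' (Ne.symm hij)]
        simp [Nat.sub_zero]; ring
    | add p q hp hq => simp [hp, hq]

lemma hasDerivAt_eval_comp {n : ℕ} (f : MvPolynomial (Fin n) ℝ)
    (γ : Fin n → ℝ → ℝ) (γ' : Fin n → ℝ) (t : ℝ) (hγ : ∀ i, HasDerivAt (γ i) (γ' i) t) :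
    HasDerivAt (fun s => eval (fun i => γ i s) f)
      (∑ i, eval (fun i => γ i t) (pderiv i f) * γ' i) t := by
  induction f using MvPolynomial.induction_on with
  | C a => simpa [pderiv_C] using hasDerivAt_const t a
  | add p q hp hq =>
      simpa [add_mul, Finset.sum_add_distrib] using hp.fun_add hq
  | mul_X p i hp =>
      have h := hp.fun_mul (hγ i)
      have : (fun s => eval (fun i => γ i s) (p * X i)) = fun s => eval (fun i => γ i s) p * γ i s := by
        funext s; simp
      rw [this] at *
      refine h.congr_deriv ?_
      simp only [pderiv_mul, pderiv_X, map_add, map_mul, eval_X, add_mul, Finset.sum_add_distrib,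
        Finset.sum_mul]
      congr 1
      · apply Finset.sum_congr rfl; intro j _; ring
      · rw [Finset.sum_eq_single i]
        · simp
        · intro j _ hj; simp [Pi.single_eq_of_ne (Ne.symm hj)]
        · simp

noncomputable def gam {n : ℕ} (xs u : Fin n → ℝ) (t : ℝ) : Fin n → ℝ :=
  fun i => Real.cos t * xs i + Real.sin t * u i

noncomputable def nu {n : ℕ} (xs u : Fin n → ℝ) (t : ℝ) : Fin n → ℝ :=
  fun i => -Real.sin t * xs i + Real.cos t * u i

noncomputable def GG {n : ℕ} (f : MvPolynomial (Fin n) ℝ) (xs u : Fin n → ℝ) (t : ℝ) : ℝ :=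
  (∑ i, ∑ j, nu xs u t i * eval (gam xs u t) (pderiv i (pderiv j f)) * nu xs u t j)
    - ∑ i, eval (gam xs u t) (pderiv i f) * gam xs u t i

lemma hasDerivAt_gam {n : ℕ} (xs u : Fin n → ℝ) (t : ℝ) (i : Fin n) :
    HasDerivAt (fun s => gam xs u s i) (nu xs u t i) t :=
  ((Real.hasDerivAt_cos t).mul_const (xs i)).add ((Real.hasDerivAt_sin t).mul_const (u i))

lemma hasDerivAt_nu {n : ℕ} (xs u : Fin n → ℝ) (t : ℝ) (i : Fin n) :
    HasDerivAt (fun s => nu xs u s i) (-(gam xs u t i)) t := by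
  have h := (((Real.hasDerivAt_sin t).fun_neg).mul_const (xs i)).fun_add
    ((Real.hasDerivAt_cos t).mul_const (u i))
  refine h.congr_deriv ?_
  simp [gam]; ring

lemma psi_hasDeriv {n : ℕ} (f : MvPolynomial (Fin n) ℝ) (xs u : Fin n → ℝ) (t : ℝ) :
    HasDerivAt (fun s => eval (gam xs u s) f)
      (∑ i, eval (gam xs u t) (pderiv i f) * nu xs u t i) t := by
  have := hasDerivAt_eval_comp f (fun i s => gam xs u s i) (fun i => nu xs u t i) t
    (fun i => hasDerivAt_gam xs u t i)
  exact this

lemma psi1_hasDeriv {n : ℕ} (f : MvPolynomial (Fin n) ℝ) (xs u : Fin n → ℝ) (t : ℝ) :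
    HasDerivAt (fun s => ∑ i, eval (gam xs u s) (pderiv i f) * nu xs u s i)
      (GG f xs u t) t := by
  have h : ∀ i : Fin n, HasDerivAt (fun s => eval (gam xs u s) (pderiv i f) * nu xs u s i)
      ((∑ j, eval (gam xs u t) (pderiv j (pderiv i f)) * nu xs u t j) * nu xs u t i
        + eval (gam xs u t) (pderiv i f) * (-(gam xs u t i))) t :=
    fun i => (psi_hasDeriv (pderiv i f) xs u t).fun_mul (hasDerivAt_nu xs u t i)
  have H := HasDerivAt.fun_sum (fun i (_ : i ∈ Finset.univ) => h i)
  refine H.congr_deriv ?_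
  rw [GG, sub_eq_add_neg, Finset.sum_add_distrib]
  congr 1
  · rw [Finset.sum_comm]
    apply Finset.sum_congr rfl; intro j _
    rw [Finset.sum_mul]
    apply Finset.sum_congr rfl; intro i _
    ring
  · rw [← Finset.sum_neg_distrib]
    apply Finset.sum_congr rfl; intro i _; ring

lemma continuous_GG {n : ℕ} (f : MvPolynomial (Fin n) ℝ) (xs : Fin n → ℝ) :
    Continuous fun p : ℝ × (Fin n → ℝ) => GG f xs p.2 p.1 := by
  have hg : Continuous fun p : ℝ × (Fin n → ℝ) => gam xs p.2 p.1 := by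
    unfold gam
    exact continuous_pi fun i => ((Real.continuous_cos.comp continuous_fst).mul
      continuous_const).add ((Real.continuous_sin.comp continuous_fst).mul
      ((continuous_apply i).comp continuous_snd))
  have hn : Continuous fun p : ℝ × (Fin n → ℝ) => nu xs p.2 p.1 := by
    unfold nu
    exact continuous_pi fun i => (((Real.continuous_sin.comp continuous_fst).neg).mul
      continuous_const).add ((Real.continuous_cos.comp continuous_fst).mul
      ((continuous_apply i).comp continuous_snd))
  have hev : ∀ q : MvPolynomial (Fin n) ℝ,
      Continuous fun p : ℝ × (Fin n → ℝ) => eval (gam xs p.2 p.1) q :=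
    fun q => (MvPolynomial.continuous_eval (p := q)).comp hg
  have hga : ∀ i, Continuous fun p : ℝ × (Fin n → ℝ) => gam xs p.2 p.1 i :=
    fun i => (continuous_apply i).comp hg
  have hna : ∀ i, Continuous fun p : ℝ × (Fin n → ℝ) => nu xs p.2 p.1 i :=
    fun i => (continuous_apply i).comp hn
  unfold GG
  exact (continuous_finset_sum _ fun i _ => continuous_finset_sum _ fun j _ =>
    (((hna i).mul (hev _)).mul (hna j))).sub
    (continuous_finset_sum _ fun i _ => (hev _).mul (hga i))

lemma quad_expand {n : ℕ} (H : Fin n → Fin n → ℝ) (u w : Fin n → ℝ) (t : ℝ) :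
    ∑ i, ∑ j, (u i + t * w i) * H i j * (u j + t * w j)
      = (∑ i, ∑ j, u i * H i j * u j)
        + t * ((∑ i, ∑ j, u i * H i j * w j) + ∑ i, ∑ j, w i * H i j * u j)
        + t ^ 2 * ∑ i, ∑ j, w i * H i j * w j := by
  simp only [mul_add, Finset.mul_sum, ← Finset.sum_add_distrib]
  refine Finset.sum_congr rfl fun i _ => ?_
  refine Finset.sum_congr rfl fun j _ => ?_
  ring

lemma bilin_symm {n : ℕ} (H : Fin n → Fin n → ℝ) (hH : ∀ i j, H i j = H j i)
    (u w : Fin n → ℝ) :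
    ∑ i, ∑ j, u i * H i j * w j = ∑ i, ∑ j, w i * H i j * u j := by
  rw [Finset.sum_comm]
  refine Finset.sum_congr rfl fun i _ => Finset.sum_congr rfl fun j _ => ?_
  rw [hH j i]; ring

lemma aeval_ofReal {n : ℕ} (xs : Fin n → ℝ) (p : MvPolynomial (Fin n) ℝ) :
    aeval (fun i => (xs i : ℂ)) p = ((eval xs p : ℝ) : ℂ) := by
  have h := eval₂_comp_left Complex.ofRealHom (RingHom.id ℝ) xs p
  rw [aeval_def]
  rw [show eval xs p = eval₂ (RingHom.id ℝ) xs p from rfl]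
  rw [show ((eval₂ (RingHom.id ℝ) xs p : ℝ) : ℂ) = Complex.ofRealHom (eval₂ (RingHom.id ℝ) xs p) from rfl, h]
  rfl

lemma rank_le_two_of_kernel {n : ℕ} (M : Matrix (Fin n ⊕ Fin n) (Fin 3) ℂ)
    (v : Fin 3 → ℂ) (hv : v ≠ 0) (h : M.mulVec v = 0) : M.rank ≤ 2 := by
  have h1 := LinearMap.finrank_range_add_finrank_ker M.mulVecLin
  have h2 : Module.finrank ℂ (Fin 3 → ℂ) = 3 := by simp
  have hmem : v ∈ LinearMap.ker M.mulVecLin := by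
    simpa [Matrix.mulVecLin_apply] using h
  have h3 : 0 < Module.finrank ℂ (LinearMap.ker M.mulVecLin) := by
    exact Module.finrank_pos_iff_exists_ne_zero.mpr ⟨⟨v, hmem⟩, by simpa using hv⟩
  rw [Matrix.rank]
  omega

lemma partA {n : ℕ} (f : MvPolynomial (Fin n) ℝ)
    (hno : ¬ ∃ x y : Fin n → ℂ, x ≠ 0 ∧ y ≠ 0 ∧
      (∑ i : Fin n, y i * x i = 0) ∧
      Matrix.rank (Matrix.of (Sum.elim
        (fun i : Fin n => ![aeval x (pderiv i f), x i, 0])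
        (fun i : Fin n =>
          ![∑ j : Fin n, aeval x (pderiv i (pderiv j f)) * y j, y i, x i]))) ≤ 2)
    (xs : Fin n → ℝ) (lam : ℝ) (hlen : ∑ i, xs i ^ 2 = 1)
    (hfoc : ∀ i, eval xs (pderiv i f) = lam * xs i)
    (hsoc : ∀ u : Fin n → ℝ, (∑ i, u i ^ 2 = 1) → (∑ i, u i * xs i = 0) →
      lam ≤ ∑ i, ∑ j, u i * eval xs (pderiv i (pderiv j f)) * u j)
    (u : Fin n → ℝ) (hu : ∑ i, u i ^ 2 = 1) (hux : ∑ i, u i * xs i = 0) :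
    lam < ∑ i, ∑ j, u i * eval xs (pderiv i (pderiv j f)) * u j := by
  set H : Fin n → Fin n → ℝ := fun i j => eval xs (pderiv i (pderiv j f)) with hHdef
  have hHs : ∀ i j, H i j = H j i := by
    intro i j
    simp only [hHdef]
    rw [my_pderiv_comm]
  rcases lt_or_eq_of_le (hsoc u hu hux) with hlt | heq
  · exact hlt
  exfalso
  -- Step 1 : nonnegativity of the quadratic form on the tangent space
  have hQ : ∀ w : Fin n → ℝ, (∑ i, w i * xs i = 0) →
      lam * (∑ i, w i ^ 2) ≤ ∑ i, ∑ j, w i * H i j * w j := by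
    intro w hw
    rcases eq_or_ne (∑ i, w i ^ 2) 0 with h0 | h0
    · have hz : ∀ i ∈ Finset.univ, w i = 0 := by
        intro i _
        have := (Finset.sum_eq_zero_iff_of_nonneg
          (fun i _ => sq_nonneg (w i))).mp h0 i (Finset.mem_univ i)
        exact pow_eq_zero_iff two_ne_zero |>.mp this
      have hz' : ∀ i, w i = 0 := fun i => hz i (Finset.mem_univ i)
      simp [hz', h0]
    · have hpos : 0 < ∑ i, w i ^ 2 :=
        lt_of_le_of_ne (Finset.sum_nonneg fun i _ => sq_nonneg _) (Ne.symm h0)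
      set r := Real.sqrt (∑ i, w i ^ 2) with hr
      have hrpos : 0 < r := Real.sqrt_pos.mpr hpos
      have hr2 : r ^ 2 = ∑ i, w i ^ 2 := Real.sq_sqrt hpos.le
      have h1 : ∑ i, (r⁻¹ * w i) ^ 2 = 1 := by
        simp only [mul_pow, ← Finset.mul_sum, ← hr2]
        field_simp
      have h2 : ∑ i, (r⁻¹ * w i) * xs i = 0 := by
        simp only [mul_assoc, ← Finset.mul_sum, hw, mul_zero]
      have h3 := hsoc _ h1 h2
      have h4 : ∑ i, ∑ j, (r⁻¹ * w i) * H i j * (r⁻¹ * w j)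
          = r⁻¹ ^ 2 * ∑ i, ∑ j, w i * H i j * w j := by
        simp only [Finset.mul_sum]
        exact Finset.sum_congr rfl fun i _ => Finset.sum_congr rfl fun j _ => by ring
      rw [h4] at h3
      have h5 := mul_le_mul_of_nonneg_right h3 (sq_nonneg r)
      rw [← hr2]
      calc lam * r ^ 2 ≤ r⁻¹ ^ 2 * (∑ i, ∑ j, w i * H i j * w j) * r ^ 2 := h5
        _ = ∑ i, ∑ j, w i * H i j * w j := by
            field_simp
  -- Step 2 : the bilinear form of u with any tangent vector vanishes
  have hBu : ∀ w : Fin n → ℝ, (∑ i, w i * xs i = 0) →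
      ∑ i, ∑ j, w i * H i j * u j = lam * ∑ i, w i * u i := by
    intro w hw
    by_contra hne
    set Bwu := ∑ i, ∑ j, w i * H i j * u j with hBwu
    set Bww := ∑ i, ∑ j, w i * H i j * w j with hBww
    set Swu := ∑ i, w i * u i with hSwu
    set Sww := ∑ i, w i ^ 2 with hSww
    set β := Bwu - lam * Swu with hβ
    have hβne : β ≠ 0 := fun hc => hne (by rw [hβ] at hc; linarith [sub_eq_zero.mp hc])
    set C := Bww - lam * Sww with hC
    have hCnn : 0 ≤ C := sub_nonneg.mpr (hQ w hw)
    set t := -β / (C + 1) with ht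
    have hC1 : (0:ℝ) < C + 1 := by linarith
    have hperp : ∑ i, (u i + t * w i) * xs i = 0 := by
      have : ∀ i, (u i + t * w i) * xs i = u i * xs i + t * (w i * xs i) := fun i => by ring
      simp only [this, Finset.sum_add_distrib, ← Finset.mul_sum, hux, hw, mul_zero, add_zero]
    have hq := hQ _ hperp
    rw [quad_expand] at hq
    have hsq : ∑ i, (u i + t * w i) ^ 2 = 1 + t * (2 * Swu) + t ^ 2 * Sww := by
      have : ∀ i, (u i + t * w i) ^ 2 = u i ^ 2 + t * (2 * (w i * u i)) + t ^ 2 * w i ^ 2 :=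
        fun i => by ring
      simp only [this, Finset.sum_add_distrib, ← Finset.mul_sum, hu, hSwu, hSww]
    rw [hsq] at hq
    have hsymm : ∑ i, ∑ j, u i * H i j * w j = Bwu := bilin_symm H hHs u w
    rw [hsymm, ← heq, ← hBwu, ← hBww] at hq
    -- hq : lam * (1 + t * (2*Swu) + t^2 * Sww) ≤ lam + t * (Bwu + Bwu) + t^2 * Bww
    have key : 2 * t * β + t ^ 2 * C < 0 := by
      rw [ht]
      have hβ2 : 0 < β ^ 2 := by positivity
      rw [div_pow]
      have e1 : 2 * (-β / (C + 1)) * β + (-β) ^ 2 / (C + 1) ^ 2 * C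
          = (-β ^ 2 * (C + 2)) / (C + 1) ^ 2 := by
        field_simp
        ring
      rw [e1]
      apply div_neg_of_neg_of_pos
      · nlinarith
      · positivity
    rw [hβ, hC] at key
    nlinarith [hq, key]
  -- Step 3/4 : H u - lam u is a multiple of xs
  set rv : Fin n → ℝ := fun i => (∑ j, H i j * u j) - lam * u i with hrv
  have hperp_r : ∀ w : Fin n → ℝ, (∑ i, w i * xs i = 0) → ∑ i, w i * rv i = 0 := by
    intro w hw
    have h1 := hBu w hw
    have e1 : ∑ i, w i * rv i
        = (∑ i, ∑ j, w i * H i j * u j) - lam * ∑ i, w i * u i := by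
      rw [Finset.mul_sum, ← Finset.sum_sub_distrib]
      refine Finset.sum_congr rfl fun i _ => ?_
      simp only [hrv, Finset.mul_sum]
      rw [mul_sub, Finset.mul_sum]
      congr 1
      · exact Finset.sum_congr rfl fun j _ => by ring
      · ring
    rw [e1, h1, sub_self]
  set c := ∑ i, xs i * rv i with hc
  have hrvc : ∀ i, rv i = c * xs i := by
    set v : Fin n → ℝ := fun i => rv i - c * xs i with hvdef
    have hvx : ∑ i, v i * xs i = 0 := by
      have : ∀ i, v i * xs i = xs i * rv i - c * (xs i * xs i) := fun i => by
        simp only [hvdef]; ring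
      simp only [this, Finset.sum_sub_distrib, ← Finset.mul_sum, ← hc]
      have : ∑ i, xs i * xs i = 1 := by
        rw [← hlen]; exact Finset.sum_congr rfl fun i _ => by ring
      rw [this, mul_one, sub_self]
    have hvr : ∑ i, v i * rv i = 0 := hperp_r v hvx
    have hvv : ∑ i, v i ^ 2 = 0 := by
      have e : ∀ i, v i ^ 2 = v i * rv i - c * (v i * xs i) := fun i => by
        simp only [hvdef]; ring
      simp only [e, Finset.sum_sub_distrib, ← Finset.mul_sum, hvr, hvx, mul_zero, sub_self]
    intro i
    have hz := (Finset.sum_eq_zero_iff_of_nonneg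
      (fun i _ => sq_nonneg (v i))).mp hvv i (Finset.mem_univ i)
    have : v i = 0 := pow_eq_zero_iff two_ne_zero |>.mp hz
    simp only [hvdef] at this
    linarith [this]
  -- Step 5 : contradiction with hno
  apply hno
  refine ⟨fun i => (xs i : ℂ), fun i => (u i : ℂ), ?_, ?_, ?_, ?_⟩
  · intro hX
    have : ∀ i, xs i = 0 := fun i => by
      have h0 := congrFun hX i
      simp only [Pi.zero_apply] at h0
      exact_mod_cast h0
    simp [this] at hlen
  · intro hY
    have : ∀ i, u i = 0 := fun i => by
      have h0 := congrFun hY i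
      simp only [Pi.zero_apply] at h0
      exact_mod_cast h0
    simp [this] at hu
  · have : ∑ i, ((u i : ℂ) * (xs i : ℂ)) = ((∑ i, u i * xs i : ℝ) : ℂ) := by
      push_cast; rfl
    rw [this, hux, Complex.ofReal_zero]
  · apply rank_le_two_of_kernel _ ![1, (-lam : ℂ), (-c : ℂ)]
    · intro hv
      have := congrFun hv 0
      simp at this
    · funext rr
      rcases rr with i | i
      · simp only [Matrix.mulVec, dotProduct, Fin.sum_univ_three, Matrix.of_apply,
          Sum.elim_inl, Matrix.cons_val_zero, Matrix.cons_val_one, Matrix.head_cons,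
          Matrix.cons_val_two, Matrix.tail_cons, Pi.zero_apply]
        rw [aeval_ofReal, hfoc i]
        push_cast
        ring
      · simp only [Matrix.mulVec, dotProduct, Fin.sum_univ_three, Matrix.of_apply,
          Sum.elim_inr, Matrix.cons_val_zero, Matrix.cons_val_one, Matrix.head_cons,
          Matrix.cons_val_two, Matrix.tail_cons, Pi.zero_apply]
        have e1 : ∑ j, aeval (fun i => (xs i : ℂ)) (pderiv i (pderiv j f)) * (u j : ℂ)
            = ((∑ j, H i j * u j : ℝ) : ℂ) := by
          push_cast
          refine Finset.sum_congr rfl fun j _ => ?_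
          rw [aeval_ofReal]
        rw [e1]
        have e2 : ∑ j, H i j * u j = c * xs i + lam * u i := by
          have := hrvc i
          simp only [hrv] at this
          linarith [this]
        rw [e2]
        push_cast
        ring

lemma gam_zero {n : ℕ} (xs u : Fin n → ℝ) : gam xs u 0 = xs := by
  funext i; simp [gam]

lemma nu_zero {n : ℕ} (xs u : Fin n → ℝ) : nu xs u 0 = u := by
  funext i; simp [nu]

lemma deltaLemma {n : ℕ} (f : MvPolynomial (Fin n) ℝ) (xs : Fin n → ℝ) (lam : ℝ)
    (hlen : ∑ i, xs i ^ 2 = 1)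
    (hfoc : ∀ i, eval xs (pderiv i f) = lam * xs i)
    (hstrict : ∀ u : Fin n → ℝ, (∑ i, u i ^ 2 = 1) → (∑ i, u i * xs i = 0) →
      lam < ∑ i, ∑ j, u i * eval xs (pderiv i (pderiv j f)) * u j) :
    ∃ δ : ℝ, 0 < δ ∧ ∀ u : Fin n → ℝ, (∑ i, u i ^ 2 = 1) → (∑ i, u i * xs i = 0) →
      ∀ θ : ℝ, |θ| < δ → eval xs f ≤ eval (gam xs u θ) f := by
  classical
  set K : Set (Fin n → ℝ) := {u | (∑ i, u i ^ 2 = 1) ∧ (∑ i, u i * xs i = 0)} with hKdef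
  -- GG at time 0 is positive for u in K
  have hG0 : ∀ u ∈ K, 0 < GG f xs u 0 := by
    intro u hu
    have h1 : GG f xs u 0
        = (∑ i, ∑ j, u i * eval xs (pderiv i (pderiv j f)) * u j)
          - ∑ i, eval xs (pderiv i f) * xs i := by
      rw [GG, gam_zero, nu_zero]
    have h2 : ∑ i, eval xs (pderiv i f) * xs i = lam := by
      have : ∀ i, eval xs (pderiv i f) * xs i = lam * xs i ^ 2 := fun i => by
        rw [hfoc i]; ring
      simp only [this, ← Finset.mul_sum, hlen, mul_one]
    rw [h1, h2, sub_pos]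
    exact hstrict u hu.1 hu.2
  have hGc := continuous_GG f xs
  -- compactness of K
  have hKcomp : IsCompact K := by
    apply Metric.isCompact_of_isClosed_isBounded
    · have c1 : IsClosed {u : Fin n → ℝ | ∑ i, u i ^ 2 = 1} :=
        isClosed_eq (by continuity) continuous_const
      have c2 : IsClosed {u : Fin n → ℝ | ∑ i, u i * xs i = 0} :=
        isClosed_eq (by continuity) continuous_const
      exact c1.inter c2
    · rw [Metric.isBounded_iff_subset_closedBall 0]
      refine ⟨1, fun u hu => ?_⟩
      rw [Metric.mem_closedBall, dist_zero_right]
      rw [pi_norm_le_iff_of_nonneg zero_le_one]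
      intro i
      have h1 : u i ^ 2 ≤ 1 := by
        rw [← hu.1]
        exact Finset.single_le_sum (fun j _ => sq_nonneg (u j)) (Finset.mem_univ i)
      rw [Real.norm_eq_abs]
      nlinarith [abs_nonneg (u i), sq_abs (u i)]
  by_cases hK : K.Nonempty
  · -- construct δ with GG positive for |t| < δ
    obtain ⟨δ, hδpos, hδle, hδ⟩ : ∃ δ : ℝ, 0 < δ ∧ δ ≤ 1 ∧
        ∀ u ∈ K, ∀ t : ℝ, |t| < δ → 0 < GG f xs u t := by
      set Bad : Set (ℝ × (Fin n → ℝ)) :=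
        (Set.Icc (-1 : ℝ) 1 ×ˢ K) ∩
          ((fun p : ℝ × (Fin n → ℝ) => GG f xs p.2 p.1) ⁻¹' Set.Iic 0) with hBdef
      have hBadcomp : IsCompact Bad :=
        ((isCompact_Icc).prod hKcomp).inter_right (isClosed_Iic.preimage hGc)
      by_cases hBad : Bad.Nonempty
      · obtain ⟨p₀, hp₀, hmin⟩ := hBadcomp.exists_isMinOn hBad
          ((continuous_abs.comp continuous_fst).continuousOn)
        have hp₀K : p₀.2 ∈ K := hp₀.1.2
        have hp₀G : GG f xs p₀.2 p₀.1 ≤ 0 := hp₀.2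
        have hne : p₀.1 ≠ 0 := by
          intro h
          rw [h] at hp₀G
          exact absurd hp₀G (not_le.mpr (hG0 p₀.2 hp₀K))
        have hle1 : |p₀.1| ≤ 1 := abs_le.mpr ⟨hp₀.1.1.1, hp₀.1.1.2⟩
        refine ⟨|p₀.1|, abs_pos.mpr hne, hle1, fun u hu t ht => ?_⟩
        by_contra hnot
        have htI : t ∈ Set.Icc (-1 : ℝ) 1 := by
          have := ht.trans_le hle1
          exact ⟨(abs_le.mp this.le).1, (abs_le.mp this.le).2⟩
        have hmem : (t, u) ∈ Bad := ⟨⟨htI, hu⟩, not_lt.mp hnot⟩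
        have := hmin hmem
        simp only at this
        exact absurd ht (not_lt.mpr this)
      · refine ⟨1, one_pos, le_refl 1, fun u hu t ht => ?_⟩
        by_contra hle
        exact hBad ⟨(t, u), ⟨⟨(abs_le.mp ht.le).1, (abs_le.mp ht.le).2⟩, hu⟩, not_lt.mp hle⟩
    refine ⟨δ, hδpos, fun u hu hux θ hθ => ?_⟩
    have huK : u ∈ K := ⟨hu, hux⟩
    set ψ1 : ℝ → ℝ := fun t => ∑ i, eval (gam xs u t) (pderiv i f) * nu xs u t i with hψ1
    have hasD1 : ∀ t : ℝ, HasDerivAt (fun s => eval (gam xs u s) f) (ψ1 t) t :=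
      fun t => psi_hasDeriv f xs u t
    have hasD2 : ∀ t : ℝ, HasDerivAt ψ1 (GG f xs u t) t :=
      fun t => psi1_hasDeriv f xs u t
    have hψ1_0 : ψ1 0 = 0 := by
      rw [hψ1]
      simp only [gam_zero, nu_zero, hfoc]
      have e : ∀ i, lam * xs i * u i = lam * (u i * xs i) := fun i => by ring
      simp only [e, ← Finset.mul_sum, hux, mul_zero]
    have hψcont : ∀ s : Set ℝ, ContinuousOn (fun t => eval (gam xs u t) f) s :=
      fun s x _ => ((hasD1 x).differentiableAt.continuousAt).continuousWithinAt
    have hψ1cont : ∀ s : Set ℝ, ContinuousOn ψ1 s :=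
      fun s x _ => ((hasD2 x).differentiableAt.continuousAt).continuousWithinAt
    have goal0 : eval xs f = eval (gam xs u 0) f := by rw [gam_zero]
    have habs := abs_lt.mp hθ
    rcases lt_trichotomy θ 0 with hneg | h0 | hpos
    · have hsm : StrictMonoOn ψ1 (Set.Icc θ 0) := by
        apply strictMonoOn_of_deriv_pos (convex_Icc θ 0) (hψ1cont _)
        intro x hx
        rw [interior_Icc] at hx
        rw [(hasD2 x).deriv]
        exact hδ u huK x (abs_lt.mpr ⟨by linarith [hx.1], by linarith [hx.2]⟩)
      have hanti : AntitoneOn (fun t => eval (gam xs u t) f) (Set.Icc θ 0) := by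
        apply antitoneOn_of_deriv_nonpos (convex_Icc θ 0) (hψcont _)
        · intro x _
          exact (hasD1 x).differentiableAt.differentiableWithinAt
        · intro x hx
          rw [interior_Icc] at hx
          rw [(hasD1 x).deriv]
          have h1 := hsm (Set.mem_Icc.mpr ⟨hx.1.le, hx.2.le⟩)
            (Set.mem_Icc.mpr ⟨hneg.le, le_refl 0⟩) hx.2
          rw [hψ1_0] at h1
          linarith
      have := hanti (Set.mem_Icc.mpr ⟨le_refl θ, hneg.le⟩)
        (Set.mem_Icc.mpr ⟨hneg.le, le_refl 0⟩) hneg.le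
      rw [goal0]
      exact this
    · rw [goal0, h0]
    · have hsm : StrictMonoOn ψ1 (Set.Icc 0 θ) := by
        apply strictMonoOn_of_deriv_pos (convex_Icc 0 θ) (hψ1cont _)
        intro x hx
        rw [interior_Icc] at hx
        rw [(hasD2 x).deriv]
        exact hδ u huK x (abs_lt.mpr ⟨by linarith [hx.1], by linarith [hx.2]⟩)
      have hmono : MonotoneOn (fun t => eval (gam xs u t) f) (Set.Icc 0 θ) := by
        apply monotoneOn_of_deriv_nonneg (convex_Icc 0 θ) (hψcont _)
        · intro x _
          exact (hasD1 x).differentiableAt.differentiableWithinAt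
        · intro x hx
          rw [interior_Icc] at hx
          rw [(hasD1 x).deriv]
          have h1 := hsm (Set.mem_Icc.mpr ⟨le_refl 0, hpos.le⟩)
            (Set.mem_Icc.mpr ⟨hx.1.le, hx.2.le⟩) hx.1
          rw [hψ1_0] at h1
          linarith
      have := hmono (Set.mem_Icc.mpr ⟨le_refl 0, hpos.le⟩)
        (Set.mem_Icc.mpr ⟨hpos.le, le_refl θ⟩) hpos.le
      rw [goal0]
      exact this
  · refine ⟨1, one_pos, fun u hu hux θ _ => ?_⟩
    exact absurd ⟨u, hu, hux⟩ hK

/-- Let `f` be a homogeneous polynomial of degree `d` on `ℝⁿ` and suppose no pair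
`(x, y) ∈ ℂⁿ × ℂⁿ` with `x ≠ 0`, `y ≠ 0` satisfies `yᵀx = 0` together with
`rank [[∇f(x), x, 0],[∇²f(x)y, y, x]] ≤ 2` (gradient and Hessian extended to `ℂⁿ`).
Then every `x* ∈ S^{n-1}` satisfying the first and second order necessary
optimality conditions for `min f` over `S^{n-1}` satisfies the second order
sufficient condition, and hence is a local minimizer of `f` on `S^{n-1}`. -/
theorem stmt19 (n d : ℕ) (f : MvPolynomial (Fin n) ℝ)
    (hhom : f.IsHomogeneous d)
    (hno : ¬ ∃ x y : Fin n → ℂ, x ≠ 0 ∧ y ≠ 0 ∧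
      (∑ i : Fin n, y i * x i = 0) ∧
      Matrix.rank (Matrix.of (Sum.elim
        (fun i : Fin n => ![aeval x (pderiv i f), x i, 0])
        (fun i : Fin n =>
          ![∑ j : Fin n, aeval x (pderiv i (pderiv j f)) * y j, y i, x i]))) ≤ 2) :
    ∀ (xs : Fin n → ℝ) (lam : ℝ), (∑ i : Fin n, xs i ^ 2 = 1) →
      (∀ i : Fin n, eval xs (pderiv i f) = lam * xs i) →
      (∀ u : Fin n → ℝ, (∑ i : Fin n, u i ^ 2 = 1) → (∑ i : Fin n, u i * xs i = 0) →
        lam ≤ ∑ i : Fin n, ∑ j : Fin n, u i * eval xs (pderiv i (pderiv j f)) * u j) →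
      ((∀ u : Fin n → ℝ, (∑ i : Fin n, u i ^ 2 = 1) → (∑ i : Fin n, u i * xs i = 0) →
          lam < ∑ i : Fin n, ∑ j : Fin n, u i * eval xs (pderiv i (pderiv j f)) * u j) ∧
        ∃ ε : ℝ, 0 < ε ∧ ∀ z : Fin n → ℝ, (∑ i : Fin n, z i ^ 2 = 1) →
          (∑ i : Fin n, (z i - xs i) ^ 2 < ε) → eval xs f ≤ eval z f) := by
  intro xs lam hlen hfoc hsoc
  have hstrict := partA f hno xs lam hlen hfoc hsoc
  refine ⟨hstrict, ?_⟩
  obtain ⟨δ, hδpos, hδ⟩ := deltaLemma f xs lam hlen hfoc hstrict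
  set δ' := min δ 1 / 2 with hδ'def
  have hminpos : 0 < min δ 1 := lt_min hδpos one_pos
  have hδ'pos : 0 < δ' := by rw [hδ'def]; linarith
  have hδ'lt : δ' < δ := by
    have h1 : min δ 1 ≤ δ := min_le_left _ _
    rw [hδ'def]; linarith
  have hδ'le : δ' ≤ 1 / 2 := by
    have h1 : min δ 1 ≤ 1 := min_le_right _ _
    rw [hδ'def]; linarith
  have hpi : (3:ℝ) < Real.pi := Real.pi_gt_three
  have hδ'pi : δ' ≤ Real.pi := by linarith
  have hcoslt : Real.cos δ' < 1 := by
    have := Real.cos_lt_cos_of_nonneg_of_le_pi (le_refl 0) hδ'pi hδ'pos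
    simpa using this
  have hcospos : 0 < Real.cos δ' :=
    Real.cos_pos_of_mem_Ioo ⟨by linarith, by linarith⟩
  refine ⟨2 - 2 * Real.cos δ', by linarith, ?_⟩
  intro z hz hznear
  set a := ∑ i, z i * xs i with ha
  have hdist : ∑ i, (z i - xs i) ^ 2 = 2 - 2 * a := by
    have e : ∀ i, (z i - xs i) ^ 2 = (z i ^ 2 + xs i ^ 2) - 2 * (z i * xs i) :=
      fun i => by ring
    simp only [e, Finset.sum_sub_distrib, Finset.sum_add_distrib, hz, hlen, ← Finset.mul_sum,
      ← ha]
    ring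
  have hacos : Real.cos δ' < a := by
    rw [hdist] at hznear; linarith
  set v : Fin n → ℝ := fun i => z i - a * xs i with hv
  have hvx : ∑ i, v i * xs i = 0 := by
    have e : ∀ i, v i * xs i = z i * xs i - a * xs i ^ 2 := fun i => by
      simp only [hv]; ring
    simp only [e, Finset.sum_sub_distrib, ← Finset.mul_sum, hlen, mul_one, ← ha, sub_self]
  have hvv : ∑ i, v i ^ 2 = 1 - a ^ 2 := by
    have e : ∀ i, v i ^ 2 = z i ^ 2 - 2 * a * (z i * xs i) + a ^ 2 * xs i ^ 2 := fun i => by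
      simp only [hv]; ring
    simp only [e, Finset.sum_add_distrib, Finset.sum_sub_distrib, ← Finset.mul_sum, hz, hlen,
      ← ha]
    ring
  rcases eq_or_ne (∑ i, v i ^ 2) 0 with h0 | h0
  · have ha2 : a ^ 2 = 1 := by rw [hvv] at h0; linarith
    have ha1 : a = 1 := by nlinarith
    have hzx : z = xs := by
      funext i
      have hvi := (Finset.sum_eq_zero_iff_of_nonneg
        (fun i _ => sq_nonneg (v i))).mp h0 i (Finset.mem_univ i)
      have hvi' : v i = 0 := pow_eq_zero_iff two_ne_zero |>.mp hvi
      simp only [hv, ha1, one_mul] at hvi'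
      linarith
    rw [hzx]
  · have hpos : 0 < ∑ i, v i ^ 2 :=
      lt_of_le_of_ne (Finset.sum_nonneg fun i _ => sq_nonneg _) (Ne.symm h0)
    have ha2lt : a ^ 2 < 1 := by rw [hvv] at hpos; linarith
    set ρ := Real.sqrt (1 - a ^ 2) with hρ
    have hρpos : 0 < ρ := Real.sqrt_pos.mpr (by linarith)
    have hρ2 : ρ ^ 2 = 1 - a ^ 2 := Real.sq_sqrt (by linarith)
    set u : Fin n → ℝ := fun i => ρ⁻¹ * v i with hu
    have hu1 : ∑ i, u i ^ 2 = 1 := by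
      simp only [hu, mul_pow, ← Finset.mul_sum, hvv, ← hρ2]
      field_simp
    have hux : ∑ i, u i * xs i = 0 := by
      simp only [hu, mul_assoc, ← Finset.mul_sum, hvx, mul_zero]
    have haIcc : -1 ≤ a ∧ a ≤ 1 := ⟨by nlinarith, by nlinarith⟩
    set θ := Real.arccos a with hθ
    have hcosθ : Real.cos θ = a := Real.cos_arccos haIcc.1 haIcc.2
    have hsinθ : Real.sin θ = ρ := by rw [hθ, Real.sin_arccos, hρ]
    have hθnn : 0 ≤ θ := Real.arccos_nonneg a
    have hθle : θ ≤ δ' := by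
      by_contra hgt
      push_neg at hgt
      have hθpi : θ ≤ Real.pi := Real.arccos_le_pi a
      have := Real.cos_lt_cos_of_nonneg_of_le_pi hδ'pos.le hθpi hgt
      rw [hcosθ] at this
      linarith
    have hθδ : |θ| < δ := by
      rw [abs_of_nonneg hθnn]; linarith
    have hgam : gam xs u θ = z := by
      funext i
      simp only [gam, hcosθ, hsinθ, hu]
      rw [← mul_assoc, mul_inv_cancel₀ hρpos.ne', one_mul]
      simp only [hv]
      ring
    have hfin := hδ u hu1 hux θ hθδ
    rw [hgam] at hfin
    exact hfin
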